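/- Let C' be a length-n code over the remainder-vector alphabet R (of size (2l+1)^3) that corrects t arbitrary errors, and let s = floor(k/(2l+1)) with k ≥ 6l. Form C by attaching to each codeword of C' all possible quotient-vector words (via x_i = (2l+1)·a_i + b_i componentwise). Then C ⊆ X^n is an (l,t) limited-magnitude probability error correction code, and C(max(s,3),3)^n · |C'| ≤ |C| ≤ C(s+3,3)^n · |C'|. -/

import Mathlib

open Finset

def consEmb (d a : ℕ) : (Fin (d+1) → ℕ) ↪ (Fin (d+1+1) → ℕ) where
  toFun y := Fin.cons a y
  inj' y1 y2 h := by
    have := congrArg Fin.tail h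
    simpa using this

lemma hockey (d m : ℕ) :
    ∑ j ∈ Finset.range (m+1), (j + d).choose d = (m + d + 1).choose (d+1) := by
  induction m with
  | zero => simp
  | succ m ih =>
    rw [Finset.sum_range_succ, ih, show m+1+d = m+d+1 from by ring,
      Nat.choose_succ_succ' (m+d+1) d]
    ring

lemma adt_card (d : ℕ) : ∀ m, (Finset.Nat.antidiagonalTuple (d+1) m).card = (m + d).choose d := by
  induction d with
  | zero => intro m; simp
  | succ d ih =>
    intro m
    have hdecomp : Finset.Nat.antidiagonalTuple (d+1+1) m =
        (Finset.HasAntidiagonal.antidiagonal m : Finset (ℕ × ℕ)).biUnion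
          (fun p => (Finset.Nat.antidiagonalTuple (d+1) p.2).map (consEmb d p.1)) := by
      ext x
      simp only [Finset.Nat.mem_antidiagonalTuple, Finset.mem_biUnion, Finset.mem_map,
        Finset.HasAntidiagonal.mem_antidiagonal, consEmb, Function.Embedding.coeFn_mk, Prod.exists]
      constructor
      · rintro rfl
        exact ⟨x 0, ∑ i : Fin (d+1), x i.succ, (Fin.sum_univ_succ x).symm, Fin.tail x,
          rfl, Fin.cons_self_tail x⟩
      · rintro ⟨a, b, hab, y, hy, rfl⟩
        change ∑ i, (Fin.cons a y : Fin (d+1+1) → ℕ) i = m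
        rw [Fin.sum_cons, hy, hab]
    have hdisj : ∀ p ∈ (Finset.HasAntidiagonal.antidiagonal m : Finset (ℕ × ℕ)),
        ∀ q ∈ (Finset.HasAntidiagonal.antidiagonal m : Finset (ℕ × ℕ)), p ≠ q →
        Disjoint ((Finset.Nat.antidiagonalTuple (d+1) p.2).map (consEmb d p.1))
          ((Finset.Nat.antidiagonalTuple (d+1) q.2).map (consEmb d q.1)) := by
      intro p hp q hq hpq
      rw [Finset.disjoint_left]
      rintro z hz hz'
      simp only [Finset.mem_map, consEmb, Function.Embedding.coeFn_mk] at hz hz'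
      obtain ⟨y1, hy1, rfl⟩ := hz
      obtain ⟨y2, hy2, h2⟩ := hz'
      apply hpq
      have h1 : p.1 = q.1 := by
        have := congrFun h2 0
        exact this.symm
      have hpm := Finset.HasAntidiagonal.mem_antidiagonal.mp hp
      have hqm := Finset.HasAntidiagonal.mem_antidiagonal.mp hq
      have hb : p.2 = q.2 := by omega
      exact Prod.ext h1 hb
    rw [hdecomp, Finset.card_biUnion hdisj]
    simp only [Finset.card_map, ih]
    rw [Finset.Nat.sum_antidiagonal_eq_sum_range_succ_mk]
    have hc : ∀ i ∈ Finset.range (m+1), ((i, m - i).2 + d).choose d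
        = (fun j => (j + d).choose d) (m + 1 - 1 - i) := by
      intro i hi; simp
    rw [Finset.sum_congr rfl hc, Finset.sum_range_reflect (fun j => (j + d).choose d) (m+1),
      hockey d m]
    ring_nf

lemma filt_card (k l : ℕ) (r : Fin 4 → ℕ) (hr : ∀ j, r j < 2*l+1) (hrk : ∑ j, r j ≤ k)
    (hmod : (∑ j, r j) % (2*l+1) = k % (2*l+1)) :
    ((Finset.Nat.antidiagonalTuple 4 k).filter (fun v => ∀ j, v j % (2*l+1) = r j)).card
      = ((k - ∑ j, r j) / (2*l+1) + 3).choose 3 := by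
  set M := 2*l+1 with hM
  have hM0 : 0 < M := by omega
  have hdvd : M ∣ (k - ∑ j, r j) :=
    Nat.dvd_of_mod_eq_zero (Nat.sub_mod_eq_zero_of_mod_eq (hmod.symm))
  set sR := (k - ∑ j, r j) / M with hsR
  have hMsR : M * sR = k - ∑ j, r j := by rw [hsR, Nat.mul_div_cancel' hdvd]
  have hkey : M * sR + ∑ j, r j = k := by omega
  rw [show ((k - ∑ j, r j) / M + 3).choose 3 = (sR + 3).choose 3 from rfl,
    ← adt_card 3 sR]
  apply Finset.card_nbij' (fun v j => v j / M) (fun a j => M * a j + r j)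
  · intro v hv
    simp only [Finset.mem_coe, Finset.mem_filter, Finset.Nat.mem_antidiagonalTuple] at hv
    rw [Finset.mem_coe, Finset.Nat.mem_antidiagonalTuple]
    have hsum : M * ∑ j, v j / M + ∑ j, r j = k := by
      calc M * ∑ j, v j / M + ∑ j, r j = ∑ j, (M * (v j / M) + v j % M) := by
            rw [Finset.mul_sum, ← Finset.sum_add_distrib]
            exact Finset.sum_congr rfl fun j _ => by rw [hv.2 j]
        _ = ∑ j, v j := Finset.sum_congr rfl fun j _ => Nat.div_add_mod (v j) M ▸ by
              rw [Nat.div_add_mod]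
        _ = k := hv.1
    have h5 : M * ∑ j, v j / M = M * sR := by omega
    exact Nat.eq_of_mul_eq_mul_left hM0 h5
  · intro a ha
    rw [Finset.mem_coe, Finset.Nat.mem_antidiagonalTuple] at ha
    simp only [Finset.mem_coe, Finset.mem_filter, Finset.Nat.mem_antidiagonalTuple]
    constructor
    · calc ∑ j, (M * a j + r j) = M * ∑ j, a j + ∑ j, r j := by
            rw [Finset.mul_sum, ← Finset.sum_add_distrib]
        _ = k := by rw [ha]; exact hkey
    · intro j
      rw [Nat.mul_add_mod, Nat.mod_eq_of_lt (hr j)]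
  · intro v hv
    simp only [Finset.mem_coe, Finset.mem_filter] at hv
    funext j
    beta_reduce
    rw [← hv.2 j, Nat.div_add_mod]
  · intro a ha
    funext j
    beta_reduce
    rw [Nat.mul_add_div hM0, Nat.div_eq_of_lt (hr j), add_zero]

lemma sum_r_bounds (k l : ℕ) (hl : 0 < l) (hk : 6*l ≤ k) (r : Fin 4 → ℕ)
    (hr : ∀ j, r j ≤ 2*l) (hmod : (∑ j, r j) % (2*l+1) = k % (2*l+1)) :
    ∑ j, r j ≤ k ∧ k/(2*l+1) ≤ (k - ∑ j, r j)/(2*l+1) + 3 ∧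
      (k - ∑ j, r j)/(2*l+1) ≤ k/(2*l+1) := by
  set M := 2*l+1 with hM
  have hM0 : 0 < M := by omega
  have hsum8 : ∑ j, r j ≤ 8*l := by
    calc ∑ j, r j ≤ ∑ _j : Fin 4, 2*l := Finset.sum_le_sum fun j _ => hr j
      _ = 8*l := by simp [Finset.sum_const]; ring
  have hrk : ∑ j, r j ≤ k := by
    by_contra h
    push_neg at h
    have h0 : ((∑ j, r j) - k) % M = 0 := Nat.sub_mod_eq_zero_of_mod_eq hmod
    have h1 : M ≤ (∑ j, r j) - k := Nat.le_of_dvd (by omega) (Nat.dvd_of_mod_eq_zero h0)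
    omega
  refine ⟨hrk, ?_, Nat.div_le_div_right (Nat.sub_le k _)⟩
  have hdvd : M ∣ (k - ∑ j, r j) :=
    Nat.dvd_of_mod_eq_zero (Nat.sub_mod_eq_zero_of_mod_eq hmod.symm)
  have hMsR : M * ((k - ∑ j, r j) / M) = k - ∑ j, r j := Nat.mul_div_cancel' hdvd
  have hkM : k = M * ((k - ∑ j, r j) / M) + ∑ j, r j := by omega
  have hdivr : (∑ j, r j) / M ≤ 3 := by
    have h4 : (∑ j, r j) / M < 4 := (Nat.div_lt_iff_lt_mul hM0).mpr (by omega)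
    omega
  calc k / M = ((k - ∑ j, r j) / M) + (∑ j, r j) / M := by
        conv_lhs => rw [hkM]
        rw [Nat.mul_add_div hM0]
    _ ≤ (k - ∑ j, r j) / M + 3 := by omega

lemma mag (l : ℕ) (e : Fin 4 → ℤ) (h0 : ∑ j, e j = 0)
    (hp : (∑ j ∈ Finset.univ.filter (fun j => 0 < e j), e j) ≤ (l:ℤ)) :
    ∀ j, |e j| ≤ (l:ℤ) := by
  intro j
  have hsplit := Finset.sum_filter_add_sum_filter_not Finset.univ (fun j => 0 < e j) e
  rw [h0] at hsplit
  rcases le_or_gt (e j) 0 with h | h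
  · have hj : j ∈ Finset.univ.filter (fun j => ¬ 0 < e j) := by
      simp only [Finset.mem_filter, Finset.mem_univ, true_and]
      exact not_lt.mpr h
    have hb := Finset.single_le_sum (f := fun i => -e i)
      (fun i hi => by
        simp only [Finset.mem_filter, Finset.mem_univ, true_and, not_lt] at hi
        simpa using hi) hj
    simp only [Finset.sum_neg_distrib] at hb
    rw [abs_of_nonpos h]
    omega
  · have hj : j ∈ Finset.univ.filter (fun j => 0 < e j) := by simp [h]
    have hb := Finset.single_le_sum (f := e)
      (fun i hi => by
        simp only [Finset.mem_filter, Finset.mem_univ, true_and] at hi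
        omega) hj
    rw [abs_of_pos h]
    omega
/-- A word of length n over the probability vectors of resolution k. -/
def IsProbWord (n k : ℕ) (x : Fin n → Fin 4 → ℕ) : Prop :=
  ∀ i, ∑ j, x i j = k

/-- An (l,t) limited-magnitude probability error. -/
def IsLMPE (n l t : ℕ) (e : Fin n → Fin 4 → ℤ) : Prop :=
  (Finset.univ.filter (fun i => e i ≠ 0)).card ≤ t ∧
  ∀ i, (∑ j, e i j) = 0 ∧
    (∑ j ∈ Finset.univ.filter (fun j => 0 < e i j), e i j) ≤ (l : ℤ)

/-- `y` is obtained from `x` by an (l,t) LMPE (both words staying valid). -/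
def LMPEReaches (n k l t : ℕ) (x y : Fin n → Fin 4 → ℕ) : Prop :=
  IsProbWord n k x ∧ IsProbWord n k y ∧
  ∃ e : Fin n → Fin 4 → ℤ, IsLMPE n l t e ∧
    ∀ i j, (y i j : ℤ) = (x i j : ℤ) + e i j

/-- A set of words corrects (l,t) LMPE iff error balls around distinct
codewords are disjoint. -/
def CorrectsLMPESet (n k l t : ℕ) (C : Set (Fin n → Fin 4 → ℕ)) : Prop :=
  ∀ x ∈ C, ∀ z ∈ C, x ≠ z → ∀ y : Fin n → Fin 4 → ℕ,
    ¬ (LMPEReaches n k l t x y ∧ LMPEReaches n k l t z y)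

/-- Construction 1 (remainder classes): attaching all compatible quotient
vectors to a code C' over the remainder vectors of minimum Hamming distance
2t+1 yields an (l,t) LMPE correction code C over the probability words, with
C(max(s,3),3)^n·|C'| ≤ |C| ≤ C(s+3,3)^n·|C'|, where s = ⌊k/(2l+1)⌋. -/
theorem remainder_class_code (n k l t : ℕ) (hl : 0 < l) (hk : 6 * l ≤ k)
    (hn : 0 < n)
    (C' : Finset (Fin n → Fin 4 → ℕ))
    (hC'R : ∀ b ∈ C', ∀ i, (∀ j, b i j ≤ 2 * l) ∧
      (∑ j, b i j) % (2 * l + 1) = k % (2 * l + 1))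
    (hC'dist : ∀ b ∈ C', ∀ c ∈ C', b ≠ c → 2 * t + 1 ≤ hammingDist b c) :
    CorrectsLMPESet n k l t
      {x | (∀ i, ∑ j, x i j = k) ∧ (fun i j => x i j % (2 * l + 1)) ∈ C'} ∧
    ((max (k / (2 * l + 1)) 3).choose 3) ^ n * C'.card ≤
      Nat.card {x : Fin n → Fin 4 → ℕ |
        (∀ i, ∑ j, x i j = k) ∧ (fun i j => x i j % (2 * l + 1)) ∈ C'} ∧
    Nat.card {x : Fin n → Fin 4 → ℕ |
        (∀ i, ∑ j, x i j = k) ∧ (fun i j => x i j % (2 * l + 1)) ∈ C'} ≤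
      ((k / (2 * l + 1) + 3).choose 3) ^ n * C'.card := by

  classical
  set M := 2*l+1 with hMdef
  constructor
  · -- correction
    rintro x ⟨hxk, hxC⟩ z ⟨hzk, hzC⟩ hxz y ⟨hxy, hzy⟩
    obtain ⟨-, -, e, ⟨het, hesum⟩, hye⟩ := hxy
    obtain ⟨-, -, f, ⟨hft, hfsum⟩, hyf⟩ := hzy
    have hbxz : (fun i j => x i j % M) = (fun i j => z i j % M) := by
      by_contra hne
      have hd := hC'dist _ hxC _ hzC hne
      have hsub : (Finset.univ.filter fun i =>
            (fun j => x i j % M) ≠ (fun j => z i j % M)) ⊆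
          (Finset.univ.filter fun i => e i ≠ 0) ∪ (Finset.univ.filter fun i => f i ≠ 0) := by
        intro i hi
        simp only [Finset.mem_filter, Finset.mem_univ, true_and, Finset.mem_union] at hi ⊢
        by_contra hcon
        push_neg at hcon
        apply hi
        funext j
        have h1 : (y i j : ℤ) = x i j := by rw [hye i j, hcon.1]; simp
        have h2 : (y i j : ℤ) = z i j := by rw [hyf i j, hcon.2]; simp
        have : (x i j : ℤ) = z i j := by omega
        have : x i j = z i j := by exact_mod_cast this
        rw [this]
      have hham : hammingDist (fun i j => x i j % M) (fun i j => z i j % M) ≤ 2*t := by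
        calc hammingDist (fun i j => x i j % M) (fun i j => z i j % M)
            = (Finset.univ.filter fun i =>
                (fun j => x i j % M) ≠ (fun j => z i j % M)).card := rfl
          _ ≤ ((Finset.univ.filter fun i => e i ≠ 0) ∪
                (Finset.univ.filter fun i => f i ≠ 0)).card := Finset.card_le_card hsub
          _ ≤ _ + _ := Finset.card_union_le _ _
          _ ≤ 2*t := by omega
      omega
    apply hxz
    funext i j
    have hmagE := mag l (e i) (hesum i).1 (hesum i).2 j
    have hmagF := mag l (f i) (hfsum i).1 (hfsum i).2 j
    rw [abs_le] at hmagE hmagF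
    have h1 := hye i j
    have h2 := hyf i j
    have hmodn : x i j % M = z i j % M := congrFun (congrFun hbxz i) j
    have hmodz : (x i j : ℤ) % M = (z i j : ℤ) % M := by
      have := congrArg (fun a : ℕ => (a : ℤ)) hmodn
      push_cast at this
      exact this
    have hdvd : (M : ℤ) ∣ ((x i j : ℤ) - z i j) := Int.ModEq.dvd hmodz.symm
    have hzero : (x i j : ℤ) - z i j = 0 := by
      apply Int.eq_zero_of_abs_lt_dvd hdvd
      rw [abs_lt]
      push_cast
      omega
    exact_mod_cast sub_eq_zero.mp hzero
  · -- counting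
    have hsetF : {x : Fin n → Fin 4 → ℕ |
          (∀ i, ∑ j, x i j = k) ∧ (fun i j => x i j % (2 * l + 1)) ∈ C'}
        = ↑(C'.biUnion (fun b => Fintype.piFinset (fun i =>
            (Finset.Nat.antidiagonalTuple 4 k).filter (fun v => ∀ j, v j % M = b i j)))) := by
      ext x
      simp only [Set.mem_setOf_eq, Finset.coe_biUnion, Set.mem_iUnion, Finset.mem_coe,
        Fintype.mem_piFinset, Finset.mem_filter, Finset.Nat.mem_antidiagonalTuple]
      constructor
      · rintro ⟨h1, h2⟩
        exact ⟨_, h2, fun i => ⟨h1 i, fun j => rfl⟩⟩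
      · rintro ⟨b, hb, hxb⟩
        refine ⟨fun i => (hxb i).1, ?_⟩
        have : (fun i j => x i j % (2*l+1)) = b :=
          funext fun i => funext fun j => (hxb i).2 j
        rw [this]; exact hb
    rw [hsetF, Nat.card_coe_set_eq, Set.ncard_coe_finset]
    have hdisj : ∀ b ∈ C', ∀ c ∈ C', b ≠ c →
        Disjoint (Fintype.piFinset (fun i =>
            (Finset.Nat.antidiagonalTuple 4 k).filter (fun v => ∀ j, v j % M = b i j)))
          (Fintype.piFinset (fun i =>
            (Finset.Nat.antidiagonalTuple 4 k).filter (fun v => ∀ j, v j % M = c i j))) := by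
      intro b hb c hc hbc
      rw [Finset.disjoint_left]
      intro x hx hx'
      rw [Fintype.mem_piFinset] at hx hx'
      apply hbc
      funext i j
      rw [← (Finset.mem_filter.mp (hx i)).2 j, (Finset.mem_filter.mp (hx' i)).2 j]
    rw [Finset.card_biUnion hdisj]
    have hcard : ∀ b ∈ C',
        (Fintype.piFinset (fun i =>
          (Finset.Nat.antidiagonalTuple 4 k).filter (fun v => ∀ j, v j % M = b i j))).card
        = ∏ i, ((Finset.Nat.antidiagonalTuple 4 k).filter
            (fun v => ∀ j, v j % M = b i j)).card := fun b _ => Fintype.card_piFinset _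
    have hbnd : ∀ b ∈ C', ∀ i : Fin n,
        ((max (k / M) 3).choose 3) ≤
          ((Finset.Nat.antidiagonalTuple 4 k).filter (fun v => ∀ j, v j % M = b i j)).card ∧
        ((Finset.Nat.antidiagonalTuple 4 k).filter (fun v => ∀ j, v j % M = b i j)).card ≤
          ((k / M + 3).choose 3) := by
      intro b hb i
      simp only [hMdef]
      obtain ⟨hble, hbmod⟩ := hC'R b hb i
      rw [hMdef] at hbmod
      obtain ⟨hrk, hlow, hhigh⟩ := sum_r_bounds k l hl hk (b i) hble hbmod
      rw [filt_card k l (b i) (fun j => by have := hble j; omega) hrk hbmod]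
      constructor
      · exact Nat.choose_le_choose _ (max_le hlow (Nat.le_add_left 3 _))
      · exact Nat.choose_le_choose _ (Nat.add_le_add_right hhigh 3)
    constructor
    · calc ((max (k / (2*l+1)) 3).choose 3) ^ n * C'.card
          = ∑ _b ∈ C', ((max (k / M) 3).choose 3) ^ n := by
            rw [Finset.sum_const, smul_eq_mul, mul_comm]
        _ ≤ ∑ b ∈ C', (Fintype.piFinset (fun i =>
            (Finset.Nat.antidiagonalTuple 4 k).filter (fun v => ∀ j, v j % M = b i j))).card := by
            apply Finset.sum_le_sum
            intro b hb
            rw [hcard b hb]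
            calc ((max (k / M) 3).choose 3) ^ n
                = ((max (k / M) 3).choose 3) ^ (Finset.univ : Finset (Fin n)).card := by
                  rw [Finset.card_univ, Fintype.card_fin]
              _ ≤ _ := Finset.pow_card_le_prod _ _ _ (fun i _ => (hbnd b hb i).1)
    · calc ∑ b ∈ C', (Fintype.piFinset (fun i =>
            (Finset.Nat.antidiagonalTuple 4 k).filter (fun v => ∀ j, v j % M = b i j))).card
          ≤ ∑ _b ∈ C', ((k / M + 3).choose 3) ^ n := by
            apply Finset.sum_le_sum
            intro b hb
            rw [hcard b hb]
            calc ∏ i, ((Finset.Nat.antidiagonalTuple 4 k).filter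
                  (fun v => ∀ j, v j % M = b i j)).card
                ≤ ((k / M + 3).choose 3) ^ (Finset.univ : Finset (Fin n)).card :=
                  Finset.prod_le_pow_card _ _ _ (fun i _ => (hbnd b hb i).2)
              _ = ((k / M + 3).choose 3) ^ n := by rw [Finset.card_univ, Fintype.card_fin]
        _ = ((k / (2*l+1) + 3).choose 3) ^ n * C'.card := by
            rw [Finset.sum_const, smul_eq_mul, mul_comm]
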